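/- Let H be a finite-dimensional real inner product space, let A, B be subspaces with A ≤ Bᗮ, and let ε : A → B be a linear isomorphism. Then ε preserves the inner product (⟪ε(v), ε(v')⟫ = ⟪v, v'⟫ for all v, v' ∈ A) if and only if { v - ε(v) : v ∈ A }ᗮ ⊓ (A ⊔ B) = { v + ε(v) : v ∈ A }. -/

import Mathlib

theorem stmt_8 {H : Type*} [NormedAddCommGroup H] [InnerProductSpace ℝ H]
    [FiniteDimensional ℝ H]
    (A B : Submodule ℝ H) (hAB : A ≤ Bᗮ) (ε : A ≃ₗ[ℝ] B) :
    (∀ v v' : A, (inner ℝ ((ε v : H)) ((ε v' : H)) : ℝ) = inner ℝ (v : H) (v' : H)) ↔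
    (LinearMap.range (A.subtype - B.subtype ∘ₗ ε.toLinearMap))ᗮ ⊓ (A ⊔ B) =
      LinearMap.range (A.subtype + B.subtype ∘ₗ ε.toLinearMap) := by
  classical
  set f := A.subtype - B.subtype ∘ₗ ε.toLinearMap with hf
  set g := A.subtype + B.subtype ∘ₗ ε.toLinearMap with hg
  have hfapp : ∀ v : A, f v = (v : H) - (ε v : H) := fun v => rfl
  have hgapp : ∀ v : A, g v = (v : H) + (ε v : H) := fun v => rfl
  have horth : ∀ (v : A) (w : B), (inner ℝ (v : H) (w : H) : ℝ) = 0 := by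
    intro v w
    rw [real_inner_comm]
    exact (Submodule.mem_orthogonal B (v : H)).1 (hAB v.2) w w.2
  have hD : Disjoint A B := ((Submodule.orthogonal_disjoint B).symm.mono_left hAB)
  -- key inner product identity
  have hkey : ∀ v w : A, (inner ℝ (f v) (g w) : ℝ) =
      inner ℝ (v : H) (w : H) - inner ℝ ((ε v : H)) ((ε w : H)) := by
    intro v w
    have h2 : (inner ℝ ((ε v : H)) (w : H) : ℝ) = 0 := by
      rw [real_inner_comm]; exact horth w (ε v)
    rw [hfapp, hgapp, inner_sub_left, inner_add_right, inner_add_right,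
      horth v (ε w), h2]
    ring
  constructor
  · intro hiso
    -- P ≤ Mᗮ ⊓ (A ⊔ B)
    have hPle : LinearMap.range g ≤ (LinearMap.range f)ᗮ ⊓ (A ⊔ B) := by
      rintro x ⟨w, rfl⟩
      refine Submodule.mem_inf.2 ⟨?_, ?_⟩
      · rw [Submodule.mem_orthogonal]
        rintro u ⟨v, rfl⟩
        rw [hkey v w, hiso v w]
        ring
      · rw [hgapp]
        exact Submodule.add_mem_sup w.2 (ε w).2
    -- finrank counts
    have hfrA : Module.finrank ℝ A = Module.finrank ℝ B := ε.finrank_eq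
    have hfinj : Function.Injective f := by
      rw [← LinearMap.ker_eq_bot]
      rw [Submodule.eq_bot_iff]
      intro v hv
      have h1 : (v : H) = (ε v : H) := by
        have := (LinearMap.mem_ker.1 hv)
        rw [hfapp] at this
        exact sub_eq_zero.1 this
      have : (v : H) ∈ A ⊓ B := ⟨v.2, h1 ▸ (ε v).2⟩
      rw [hD.eq_bot] at this
      exact Subtype.ext (by simpa using this)
    have hginj : Function.Injective g := by
      rw [← LinearMap.ker_eq_bot, Submodule.eq_bot_iff]
      intro v hv
      have h1 : (v : H) = -(ε v : H) := by
        have := LinearMap.mem_ker.1 hv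
        rw [hgapp] at this
        exact eq_neg_of_add_eq_zero_left this
      have hmem : (v : H) ∈ A ⊓ B := ⟨v.2, h1 ▸ (B.neg_mem (ε v).2)⟩
      rw [hD.eq_bot] at hmem
      exact Subtype.ext (by simpa using hmem)
    have hMle : LinearMap.range f ≤ A ⊔ B := by
      rintro x ⟨v, rfl⟩
      rw [hfapp]
      exact Submodule.sub_mem _ (Submodule.mem_sup_left v.2)
        (Submodule.mem_sup_right (ε v).2)
    have hdim1 : Module.finrank ℝ (LinearMap.range f) = Module.finrank ℝ A :=
      LinearMap.finrank_range_of_inj hfinj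
    have hdim2 : Module.finrank ℝ (LinearMap.range g) = Module.finrank ℝ A :=
      LinearMap.finrank_range_of_inj hginj
    have hsup : Module.finrank ℝ (A ⊔ B : Submodule ℝ H) =
        Module.finrank ℝ A + Module.finrank ℝ B := by
      have := Submodule.finrank_sup_add_finrank_inf_eq A B
      rw [hD.eq_bot, finrank_bot, add_zero] at this
      exact this
    have horthdim := Submodule.finrank_add_inf_finrank_orthogonal hMle
    have hdimeq : Module.finrank ℝ (LinearMap.range g) =
        Module.finrank ℝ ((LinearMap.range f)ᗮ ⊓ (A ⊔ B) : Submodule ℝ H) := by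
      omega
    exact (Submodule.eq_of_le_of_finrank_eq hPle hdimeq).symm
  · intro heq v v'
    have hPle : LinearMap.range g ≤ (LinearMap.range f)ᗮ := heq ▸ inf_le_left
    have h0 : (inner ℝ (f v') (g v) : ℝ) = 0 := by
      have := (Submodule.mem_orthogonal _ _).1 (hPle ⟨v, rfl⟩) (f v') ⟨v', rfl⟩
      exact this
    rw [hkey v' v] at h0
    have h1 : (inner ℝ ((ε v' : H)) ((ε v : H)) : ℝ) = inner ℝ (v' : H) (v : H) := by linarith
    rw [real_inner_comm]
    rw [h1]
    exact real_inner_comm _ _
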